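/- Let K be a nontrivial commutative semiring that is positive and multiplicatively cancellative. Then K embeds into a positive semifield F, i.e., there is an injective semiring homomorphism from K into F. Moreover, if K is additively cancellative, then F can be chosen additively cancellative; and if K is naturally totally ordered, then F can be chosen naturally totally ordered. -/
import Mathlib


/-! # Preliminaries: K-relations over semirings -/

open Finset

variable {V : Type*}

/-- A tuple over the finite set `X` of variables: it assigns to each variable
`a ∈ X` a value in its domain `Dom a`. -/
abbrev Tup (Dom : V → Type*) (X : Finset V) : Type _ :=
  ∀ a : X, Dom a

/-- Restriction `t[Y]` of a tuple `t` over `X` to a subset `Y ⊆ X`. -/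
def Tup.restrict {Dom : V → Type*} {X Y : Finset V} (h : Y ⊆ X) (t : Tup Dom X) :
    Tup Dom Y :=
  fun a => t ⟨a.1, h a.2⟩

open Classical in
/-- The marginal of a `K`-relation `R` over a schema `X` on a subset `Y ⊆ X`,
evaluated at a tuple `u` over `Y`: the sum of `R t` over all tuples `t` over `X`
with `t[Y] = u`. -/
noncomputable def margin {K : Type*} [CommSemiring K] [DecidableEq V]
    {Dom : V → Type*} [∀ a, Fintype (Dom a)] {X Y : Finset V}
    (R : Tup Dom X → K) (h : Y ⊆ X) (u : Tup Dom Y) : K :=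
  ∑ t : Tup Dom X, if Tup.restrict h t = u then R t else 0

open Classical in
/-- `c_S(u)`: the product of the marginal `S[Z]` over all tuples `v` in the
support of `S[Z]` different from `u` (empty products are `1`). -/
noncomputable def cfun {K : Type*} [CommSemiring K] [DecidableEq V]
    {Dom : V → Type*} [∀ a, Fintype (Dom a)] {Y Z : Finset V}
    (S : Tup Dom Y → K) (h : Z ⊆ Y) (u : Tup Dom Z) : K :=
  ∏ v : Tup Dom Z, if margin S h v ≠ 0 ∧ v ≠ u then margin S h v else 1

/-- The join `R ⋈ S` of a `K`-relation `R` over `X` and a `K`-relation `S` over `Y`,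
realized on the schema `T = X ∪ Y`:
`(R ⋈ S)(t) = R(t[X]) ⬝ S(t[Y]) ⬝ c_S(t[X ∩ Y])`. -/
noncomputable def joinOn {K : Type*} [CommSemiring K] [DecidableEq V]
    {Dom : V → Type*} [∀ a, Fintype (Dom a)] {X Y T : Finset V}
    (R : Tup Dom X → K) (S : Tup Dom Y → K)
    (hX : X ⊆ T) (hY : Y ⊆ T) (_hT : T ⊆ X ∪ Y) : Tup Dom T → K :=
  fun t =>
    R (Tup.restrict hX t) * S (Tup.restrict hY t) *
      cfun (Z := X ∩ Y) S Finset.inter_subset_right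
        (Tup.restrict ((Finset.inter_subset_right (s₁ := X)).trans hY) t)

/-- A `K`-relation `R` over the schema `S` satisfies the conditional independence
`CI(X; Y, Z)` (for `X, Y, Z ⊆ S`) if for every tuple `t` over `X ∪ Y ∪ Z`,
`R(t[X∪Y]) ⬝ R(t[X∪Z]) = R(t[X∪Y∪Z]) ⬝ R(t[X])`, all values being marginals of `R`. -/
def satCI {K : Type*} [CommSemiring K] [DecidableEq V]
    {Dom : V → Type*} [∀ a, Fintype (Dom a)] {S X Y Z : Finset V}
    (R : Tup Dom S → K) (hX : X ⊆ S) (hY : Y ⊆ S) (hZ : Z ⊆ S) : Prop :=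
  ∀ t : Tup Dom (X ∪ Y ∪ Z),
    margin R (Finset.union_subset hX hY) (Tup.restrict Finset.subset_union_left t) *
      margin R (Finset.union_subset hX hZ)
        (Tup.restrict (Finset.union_subset
          (Finset.subset_union_left.trans Finset.subset_union_left)
          Finset.subset_union_right) t) =
    margin R (Finset.union_subset (Finset.union_subset hX hY) hZ) t *
      margin R hX
        (Tup.restrict (Finset.subset_union_left.trans Finset.subset_union_left) t)

/-- A `K`-relation `R` over the schema `S` satisfies the functional dependency
`U → W` if any two tuples in the support of `R` agreeing on `U` agree on `W`. -/
def satFD {K : Type*} [Zero K] {Dom : V → Type*} {S U W : Finset V}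
    (R : Tup Dom S → K) (hU : U ⊆ S) (hW : W ⊆ S) : Prop :=
  ∀ t t' : Tup Dom S, R t ≠ 0 → R t' ≠ 0 →
    Tup.restrict hU t = Tup.restrict hU t' → Tup.restrict hW t = Tup.restrict hW t'

/-- Two `K`-relations over the same schema are equivalent (up to normalization),
`R ≡ R'`, if `aR = bR'` for some nonzero `a, b ∈ K`. -/
def equivRel {K : Type*} [CommSemiring K] {Dom : V → Type*} {X : Finset V}
    (R R' : Tup Dom X → K) : Prop :=
  ∃ a b : K, a ≠ 0 ∧ b ≠ 0 ∧ ∀ t, a * R t = b * R' t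

/-- `K` is `⊕`-positive: `a + b = 0` implies `a = b = 0`. -/
def plusPos (K : Type*) [CommSemiring K] : Prop :=
  ∀ a b : K, a + b = 0 → a = 0 ∧ b = 0

/-- `K` has no divisors of zero. -/
def noZD (K : Type*) [CommSemiring K] : Prop :=
  ∀ a b : K, a * b = 0 → a = 0 ∨ b = 0

/-- `K` is positive: `⊕`-positive and without zero divisors. -/
def posSemiring (K : Type*) [CommSemiring K] : Prop :=
  plusPos K ∧ noZD K

/-- `K` is multiplicatively cancellative. -/
def mulCanc (K : Type*) [CommSemiring K] : Prop :=
  ∀ a b c : K, a ≠ 0 → a * b = a * c → b = c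

/-- `K` is additively cancellative. -/
def addCanc (K : Type*) [CommSemiring K] : Prop :=
  ∀ a b c : K, a + b = a + c → b = c

/-- `K` is naturally totally ordered: the preorder `a ≤ b ↔ ∃ c, a + c = b`
is antisymmetric and total. -/
def natTotOrd (K : Type*) [CommSemiring K] : Prop :=
  (∀ a b : K, (∃ c, a + c = b) → (∃ c, b + c = a) → a = b) ∧
    (∀ a b : K, (∃ c, a + c = b) ∨ (∃ c, b + c = a))

/-- `K` is a semifield: every nonzero element has a multiplicative inverse. -/
def isSemifield (K : Type*) [CommSemiring K] : Prop :=
  ∀ a : K, a ≠ 0 → ∃ b, a * b = 1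

theorem subL [DecidableEq V] {X Y Z : Finset V} : X ⊆ X ∪ Y ∪ Z :=
  Finset.subset_union_left.trans Finset.subset_union_left

theorem subM [DecidableEq V] {X Y Z : Finset V} : Y ⊆ X ∪ Y ∪ Z :=
  Finset.subset_union_right.trans Finset.subset_union_left

theorem subR [DecidableEq V] {X Y Z : Finset V} : Z ⊆ X ∪ Y ∪ Z :=
  Finset.subset_union_right

theorem subXY [DecidableEq V] {X Y Z : Finset V} : X ∪ Y ⊆ X ∪ Y ∪ Z :=
  Finset.subset_union_left

theorem subXZ [DecidableEq V] {X Y Z : Finset V} : X ∪ Z ⊆ X ∪ Y ∪ Z :=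
  Finset.union_subset subL subR

theorem unionSplit [DecidableEq V] {X Y Z : Finset V} :
    X ∪ Y ∪ Z ⊆ (X ∪ Y) ∪ (X ∪ Z) := by
  intro a ha
  simp only [Finset.mem_union] at ha ⊢
  tauto

/-- Any nontrivial positive, multiplicatively cancellative commutative semiring
embeds in a positive semifield; moreover the semifield inherits additive
cancellativity and natural total orderedness from `K`. -/
theorem positive_mulCancellative_embeds_positive_semifield
    (K : Type) [CommSemiring K] [Nontrivial K]
    (hpos : posSemiring K) (hmc : mulCanc K) :
    ∃ (F : Type) (_ : CommSemiring F) (f : K →+* F),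
      Function.Injective f ∧ posSemiring F ∧ isSemifield F ∧
        (addCanc K → addCanc F) ∧ (natTotOrd K → natTotOrd F) := by
  
  classical
  haveI : NoZeroDivisors K := ⟨fun {a b} h => hpos.2 a b h⟩
  set M : Submonoid K := nonZeroDivisors K with hM
  set F := Localization M with hF
  have hMne : ∀ x : M, (x : K) ≠ 0 := fun x => nonZeroDivisors.coe_ne_zero x
  have hmulne : ∀ x y : K, x ≠ 0 → y ≠ 0 → x * y ≠ 0 := by
    intro x y hx hy h
    rcases hpos.2 _ _ h with h' | h' <;> tauto
  -- key equality criterion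
  have key : ∀ (a b : K) (s t : M),
      (Localization.mk a s = Localization.mk b t) ↔ (t : K) * a = (s : K) * b := by
    intro a b s t
    rw [Localization.mk_eq_mk_iff, Localization.r_iff_exists]
    constructor
    · rintro ⟨c, hc⟩
      exact hmc c _ _ (hMne c) hc
    · intro h
      exact ⟨1, by rw [h]⟩
  have hz : ∀ (a : K) (s : M), Localization.mk a s = 0 ↔ a = 0 := by
    intro a s
    rw [← Localization.mk_zero (1 : M), key]
    simp
  refine ⟨F, inferInstance, algebraMap K F, ?_, ⟨?_, ?_⟩, ?_, ?_, ?_⟩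
  · -- injectivity
    intro x y h
    obtain ⟨c, hc⟩ := (IsLocalization.eq_iff_exists M F).mp h
    exact hmc c x y (hMne c) hc
  · -- plusPos
    intro x y hxy
    induction x using Localization.induction_on with | H x => ?_
    induction y using Localization.induction_on with | H y => ?_
    obtain ⟨a, s⟩ := x
    obtain ⟨b, t⟩ := y
    rw [Localization.add_mk, hz] at hxy
    obtain ⟨h1, h2⟩ := hpos.1 _ _ hxy
    rcases hpos.2 _ _ h1 with h | h
    · exact absurd h (hMne s)
    · rcases hpos.2 _ _ h2 with h' | h'
      · exact absurd h' (hMne t)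
      · exact ⟨(hz a s).mpr h', (hz b t).mpr h⟩
  · -- noZD
    intro x y hxy
    induction x using Localization.induction_on with | H x => ?_
    induction y using Localization.induction_on with | H y => ?_
    obtain ⟨a, s⟩ := x
    obtain ⟨b, t⟩ := y
    rw [Localization.mk_mul, hz] at hxy
    rcases hpos.2 _ _ hxy with h | h
    · exact Or.inl ((hz a s).mpr h)
    · exact Or.inr ((hz b t).mpr h)
  · -- semifield
    intro x hx
    induction x using Localization.induction_on with | H x => ?_
    obtain ⟨a, s⟩ := x
    have ha : a ≠ 0 := fun h => hx ((hz a s).mpr h)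
    refine ⟨Localization.mk (s : K) ⟨a, mem_nonZeroDivisors_of_ne_zero ha⟩, ?_⟩
    rw [Localization.mk_mul, ← Localization.mk_one, key]
    push_cast
    ring
  · -- addCanc
    intro hac x y z hxyz
    induction x using Localization.induction_on with | H x => ?_
    induction y using Localization.induction_on with | H y => ?_
    induction z using Localization.induction_on with | H z => ?_
    obtain ⟨a, s⟩ := x
    obtain ⟨b, t⟩ := y
    obtain ⟨c, u⟩ := z
    rw [Localization.add_mk, Localization.add_mk, key] at hxyz
    push_cast at hxyz
    have h2 : (s : K) * t * u * a + (s : K) * s * (u * b) =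
        (s : K) * t * u * a + (s : K) * s * (t * c) := by
      calc (s : K) * t * u * a + (s : K) * s * (u * b)
          = (s : K) * u * ((s : K) * b + (t : K) * a) := by ring
        _ = (s : K) * t * ((s : K) * c + (u : K) * a) := hxyz
        _ = (s : K) * t * u * a + (s : K) * s * (t * c) := by ring
    have h3 := hac _ _ _ h2
    have h4 := hmc _ _ _ (hmulne _ _ (hMne s) (hMne s)) h3
    rw [key]
    exact h4
  · -- natTotOrd
    rintro ⟨hanti, htot⟩
    constructor
    · rintro x y ⟨p, hp⟩ ⟨q, hq⟩
      induction x using Localization.induction_on with | H x => ?_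
      induction y using Localization.induction_on with | H y => ?_
      induction p using Localization.induction_on with | H p => ?_
      induction q using Localization.induction_on with | H q => ?_
      obtain ⟨a, s⟩ := x
      obtain ⟨b, t⟩ := y
      obtain ⟨c, u⟩ := p
      obtain ⟨d, w⟩ := q
      rw [Localization.add_mk, key] at hp hq
      push_cast at hp hq
      -- hp : t * (s * c + u * a) = s * u * b
      -- hq : s * (t * d + w * b) = t * w * a
      have h1 : (w : K) * u * ((t : K) * a) + (w : K) * ((t : K) * s * c) =
          (w : K) * u * ((s : K) * b) := by
        calc (w : K) * u * ((t : K) * a) + (w : K) * ((t : K) * s * c)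
            = (w : K) * ((t : K) * ((s : K) * c + (u : K) * a)) := by ring
          _ = (w : K) * ((s : K) * u * b) := by rw [hp]
          _ = (w : K) * u * ((s : K) * b) := by ring
      have h2 : (w : K) * u * ((s : K) * b) + (u : K) * ((s : K) * t * d) =
          (w : K) * u * ((t : K) * a) := by
        calc (w : K) * u * ((s : K) * b) + (u : K) * ((s : K) * t * d)
            = (u : K) * ((s : K) * ((t : K) * d + (w : K) * b)) := by ring
          _ = (u : K) * ((t : K) * w * a) := by rw [hq]
          _ = (w : K) * u * ((t : K) * a) := by ring
      have heq := hanti _ _ ⟨_, h1⟩ ⟨_, h2⟩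
      have h4 := hmc _ _ _ (hmulne _ _ (hMne w) (hMne u)) heq
      rw [key]
      exact h4
    · intro x y
      induction x using Localization.induction_on with | H x => ?_
      induction y using Localization.induction_on with | H y => ?_
      obtain ⟨a, s⟩ := x
      obtain ⟨b, t⟩ := y
      rcases htot ((t : K) * a) ((s : K) * b) with ⟨c, hc⟩ | ⟨c, hc⟩
      · left
        refine ⟨Localization.mk c (s * t), ?_⟩
        rw [Localization.add_mk, key]
        push_cast
        calc (t : K) * ((s : K) * c + (s : K) * t * a)
            = (s : K) * t * ((t : K) * a + c) := by ring
          _ = (s : K) * t * ((s : K) * b) := by rw [hc]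
          _ = (s : K) * ((s : K) * t) * b := by ring
      · right
        refine ⟨Localization.mk c (t * s), ?_⟩
        rw [Localization.add_mk, key]
        push_cast
        calc (s : K) * ((t : K) * c + (t : K) * s * b)
            = (t : K) * s * ((s : K) * b + c) := by ring
          _ = (t : K) * s * ((t : K) * a) := by rw [hc]
          _ = (t : K) * ((t : K) * s) * a := by ring
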